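/- Let γ > 0 and suppose X(z) = 1 + Σ_{ℓ≥1} x_ℓ z^ℓ is a formal power series, and for each Łukasiewicz path define the x-dependent weight wt_x(Γ) as the usual weight but with (c₁ − x) in place of c₁ for horizontal steps at height 0 (where c₁ is a fixed scalar). If X(z) = Σ_{ℓ≥0} Σ_{Γ∈L(ℓ)} wt_0(Γ) z^ℓ, then Σ_{ℓ≥0} Σ_{Γ∈L(ℓ)} wt_x(Γ) z^ℓ = X(z) · Σ_{m≥0} (−x·z·X(z))^m, as an identity of formal power series in z. -/

import Mathlib

def IsLuk (s : List ℤ) : Prop :=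
  (∀ z ∈ s, -1 ≤ z) ∧ (∀ n : ℕ, 0 ≤ (s.take n).sum) ∧ s.sum = 0

/-- Height of the path before step `k`. -/
def ht (s : List ℤ) (k : ℕ) : ℤ := (s.take k).sum

open Finset in
/-- The weight of a Łukasiewicz path with a general multiplicative step weight
`w z h` (step value `z`, height `h` before the step). -/
noncomputable def wtStep (w : ℤ → ℕ → ℝ) (s : List ℤ) : ℝ :=
  ∏ k ∈ Finset.range s.length, w (s.getD k 0) (ht s k).toNat

open Finset in
/-- The `x`-dependent weight: as `wtStep`, but with `c₁ - x` in place of the weight of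
each horizontal step at height `0`. -/
noncomputable def wtStepX (x c₁ : ℝ) (w : ℤ → ℕ → ℝ) (s : List ℤ) : ℝ :=
  ∏ k ∈ Finset.range s.length,
    if s.getD k 0 = 0 ∧ ht s k = 0 then (c₁ - x) else w (s.getD k 0) (ht s k).toNat


open Finset

lemma lists_finite (T : Set ℤ) (hT : T.Finite) :
    ∀ n, {s : List ℤ | s.length = n ∧ ∀ z ∈ s, z ∈ T}.Finite := by
  intro n
  induction n with
  | zero =>
    apply Set.Finite.subset (Set.finite_singleton ([] : List ℤ))
    rintro s ⟨hs, -⟩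
    simp [List.length_eq_zero_iff.mp hs]
  | succ n ih =>
    apply Set.Finite.subset ((hT.prod ih).image (fun p => p.1 :: p.2))
    rintro s ⟨hs, hmem⟩
    obtain ⟨a, t, rfl⟩ : ∃ a t, s = a :: t := by
      cases s with
      | nil => simp at hs
      | cons a t => exact ⟨a, t, rfl⟩
    exact ⟨(a, t), ⟨hmem a (by simp), by simp at hs; exact ⟨hs, fun z hz => hmem z (by simp [hz])⟩⟩, rfl⟩

lemma neg_length_le_sum (s : List ℤ) (h : ∀ z ∈ s, -1 ≤ z) : -(s.length : ℤ) ≤ s.sum := by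
  induction s with
  | nil => simp
  | cons a t ih =>
    have := h a (by simp)
    have := ih (fun z hz => h z (by simp [hz]))
    simp only [List.sum_cons, List.length_cons]
    push_cast
    linarith

lemma luk_finite (n : ℕ) : {s : List ℤ | s.length = n ∧ IsLuk s}.Finite := by
  apply Set.Finite.subset (lists_finite (Set.Icc (-1 : ℤ) n) (Set.finite_Icc _ _) n)
  rintro s ⟨hlen, h1, _, h3⟩
  refine ⟨hlen, fun z hz => ⟨h1 z hz, ?_⟩⟩
  obtain ⟨t, u, rfl⟩ := List.append_of_mem hz
  have ht' : -(t.length : ℤ) ≤ t.sum := neg_length_le_sum t (fun z hz => h1 z (by simp [hz]))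
  have hu' : -(u.length : ℤ) ≤ u.sum := neg_length_le_sum u (fun z hz => h1 z (by simp [hz]))
  have hsum : t.sum + (z + u.sum) = 0 := by simpa using h3
  have : t.length + (u.length + 1) = n := by simpa using hlen
  omega


lemma prod_telescope (f g : ℕ → ℝ) (n : ℕ) :
    ∏ k ∈ range n, f k = (∏ k ∈ range n, g k)
      + ∑ j ∈ range n, (∏ k ∈ range j, f k) * (f j - g j) * ∏ k ∈ Ico (j+1) n, g k := by
  induction n with
  | zero => simp
  | succ n ih =>
    have h1 : ∑ j ∈ range n, (∏ k ∈ range j, f k) * (f j - g j) * ∏ k ∈ Ico (j+1) (n+1), g k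
        = (∑ j ∈ range n, (∏ k ∈ range j, f k) * (f j - g j) * ∏ k ∈ Ico (j+1) n, g k) * g n := by
      rw [sum_mul]
      refine Finset.sum_congr rfl fun j hj => ?_
      rw [Finset.prod_Ico_succ_top (by simp at hj; omega : j + 1 ≤ n)]
      ring
    rw [prod_range_succ, prod_range_succ, sum_range_succ, h1, Finset.Ico_self, prod_empty, ih]
    ring

lemma ht_succ (s : List ℤ) (k : ℕ) (hk : k < s.length) :
    ht s (k+1) = ht s k + s.getD k 0 := by
  unfold ht
  rw [List.take_succ, List.sum_append]
  simp [List.getD, List.getElem?_eq_getElem hk]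

lemma ht_take (s : List ℤ) (j k : ℕ) (hk : k ≤ j) : ht (s.take j) k = ht s k := by
  unfold ht
  rw [List.take_take, Nat.min_eq_left hk]

lemma getD_take (s : List ℤ) (j k : ℕ) (hk : k < j) :
    (s.take j).getD k 0 = s.getD k 0 := by
  simp [List.getD, List.getElem?_take, hk]

lemma ht_drop (s : List ℤ) (m k : ℕ) : ht s (m + k) = ht s m + ht (s.drop m) k := by
  unfold ht
  rw [List.take_add, List.sum_append]

lemma getD_drop (s : List ℤ) (m k : ℕ) : (s.drop m).getD k 0 = s.getD (m + k) 0 := by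
  simp [List.getD, List.getElem?_drop]

lemma wtStepX_take (x c₁ : ℝ) (w : ℤ → ℕ → ℝ) (s : List ℤ) (j : ℕ) (hj : j ≤ s.length) :
    wtStepX x c₁ w (s.take j) = ∏ k ∈ range j,
      (if s.getD k 0 = 0 ∧ ht s k = 0 then (c₁ - x) else w (s.getD k 0) (ht s k).toNat) := by
  unfold wtStepX
  rw [List.length_take, Nat.min_eq_left hj]
  exact Finset.prod_congr rfl fun k hk => by
    simp only [mem_range] at hk
    rw [getD_take s j k hk, ht_take s j k (le_of_lt hk)]

lemma wtStep_drop (w : ℤ → ℕ → ℝ) (s : List ℤ) (j : ℕ) (hj : j < s.length)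
    (h0 : ht s (j+1) = 0) :
    wtStep w (s.drop (j+1)) = ∏ k ∈ Ico (j+1) s.length,
      w (s.getD k 0) (ht s k).toNat := by
  unfold wtStep
  rw [Finset.prod_Ico_eq_prod_range, List.length_drop]
  refine Finset.prod_congr rfl fun k hk => ?_
  have h2 : ht s (j + 1 + k) = ht (s.drop (j+1)) k := by
    rw [ht_drop s (j+1) k, h0, zero_add]
  rw [getD_drop, h2]

lemma wtStepX_expand (x c₁ : ℝ) (w : ℤ → ℕ → ℝ) (hw : w 0 0 = c₁) (s : List ℤ) :
    wtStepX x c₁ w s = wtStep w s + ∑ j ∈ range s.length,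
      if s.getD j 0 = 0 ∧ ht s j = 0 then
        wtStepX x c₁ w (s.take j) * (-x) * wtStep w (s.drop (j+1)) else 0 := by
  have := prod_telescope
    (fun k => if s.getD k 0 = 0 ∧ ht s k = 0 then (c₁ - x) else w (s.getD k 0) (ht s k).toNat)
    (fun k => w (s.getD k 0) (ht s k).toNat) s.length
  refine Eq.trans this ?_
  congr 1
  refine Finset.sum_congr rfl fun j hj => ?_
  simp only [mem_range] at hj
  by_cases hc : s.getD j 0 = 0 ∧ ht s j = 0
  · rw [if_pos hc, if_pos hc]
    have h0 : ht s (j+1) = 0 := by rw [ht_succ s j hj, hc.1, hc.2, add_zero]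
    rw [wtStepX_take x c₁ w s j (le_of_lt hj), wtStep_drop w s j hj h0]
    have : c₁ - x - w (s.getD j 0) (ht s j).toNat = -x := by
      rw [hc.1, hc.2]; simp [hw]
    rw [this]
  · rw [if_neg hc, if_neg hc]
    simp

lemma take_mem_luk (s : List ℤ) (hs : IsLuk s) (j : ℕ) (hj : j ≤ s.length)
    (h0 : ht s j = 0) : (s.take j).length = j ∧ IsLuk (s.take j) := by
  obtain ⟨h1, h2, h3⟩ := hs
  refine ⟨by simp [hj], fun z hz => h1 z (List.mem_of_mem_take hz), fun k => ?_, h0⟩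
  rw [List.take_take]
  exact h2 _

lemma drop_mem_luk (s : List ℤ) (hs : IsLuk s) (j : ℕ)
    (h0 : ht s j = 0) : (s.drop j).length = s.length - j ∧ IsLuk (s.drop j) := by
  obtain ⟨h1, h2, h3⟩ := hs
  refine ⟨by simp, fun z hz => h1 z (List.mem_of_mem_drop hz), fun k => ?_, ?_⟩
  · have := ht_drop s j k
    rw [h0, zero_add] at this
    rw [show ((s.drop j).take k).sum = ht (s.drop j) k from rfl, ← this]
    exact h2 _
  · have : s.sum = (s.take j).sum + (s.drop j).sum := by
      rw [← List.sum_append, List.take_append_drop]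
    rw [h3] at this
    rw [show ((s.take j).sum : ℤ) = ht s j from rfl, h0] at this
    linarith

lemma append_mem_luk (a b : List ℤ) (ha : IsLuk a) (hb : IsLuk b) :
    IsLuk (a ++ 0 :: b) := by
  obtain ⟨a1, a2, a3⟩ := ha
  obtain ⟨b1, b2, b3⟩ := hb
  refine ⟨fun z hz => ?_, fun k => ?_, ?_⟩
  · rcases List.mem_append.mp hz with h | h
    · exact a1 z h
    · rcases List.mem_cons.mp h with rfl | h
      · norm_num
      · exact b1 z h
  · rw [List.take_append, List.sum_append]
    have h1 : 0 ≤ (a.take k).sum := a2 k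
    have h2 : 0 ≤ ((0 :: b : List ℤ).take (k - a.length)).sum := by
      cases hk : k - a.length with
      | zero => simp
      | succ m => simpa using b2 m
    linarith
  · simp [a3, b3]


lemma Y_rec (x c₁ : ℝ) (w : ℤ → ℕ → ℝ) (hw : w 0 0 = c₁) (n : ℕ) :
    ∑ s ∈ (luk_finite n).toFinset, wtStepX x c₁ w s
      = (∑ s ∈ (luk_finite n).toFinset, wtStep w s)
        + ∑ j ∈ range n, (∑ s ∈ (luk_finite j).toFinset, wtStepX x c₁ w s) * (-x)
            * (∑ s ∈ (luk_finite (n-1-j)).toFinset, wtStep w s) := by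
  have hmem : ∀ m (s : List ℤ), s ∈ (luk_finite m).toFinset ↔ s.length = m ∧ IsLuk s := by
    intro m s; rw [Set.Finite.mem_toFinset]; exact Iff.rfl
  have step1 : ∑ s ∈ (luk_finite n).toFinset, wtStepX x c₁ w s
      = (∑ s ∈ (luk_finite n).toFinset, wtStep w s)
        + ∑ j ∈ range n, ∑ s ∈ (luk_finite n).toFinset,
          (if s.getD j 0 = 0 ∧ ht s j = 0 then
            wtStepX x c₁ w (s.take j) * (-x) * wtStep w (s.drop (j+1)) else 0) := by
    rw [Finset.sum_comm, ← Finset.sum_add_distrib]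
    refine Finset.sum_congr rfl fun s hs => ?_
    rw [wtStepX_expand x c₁ w hw s, ((hmem n s).mp hs).1]
  rw [step1]
  congr 1
  refine Finset.sum_congr rfl fun j hj => ?_
  simp only [mem_range] at hj
  -- per-j bijection
  rw [Finset.sum_ite, Finset.sum_const_zero, add_zero]
  have key : ∑ s ∈ (luk_finite n).toFinset.filter (fun s => s.getD j 0 = 0 ∧ ht s j = 0),
      wtStepX x c₁ w (s.take j) * (-x) * wtStep w (s.drop (j+1))
      = ∑ p ∈ (luk_finite j).toFinset ×ˢ (luk_finite (n-1-j)).toFinset,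
          wtStepX x c₁ w p.1 * (-x) * wtStep w p.2 := by
    refine Finset.sum_nbij' (fun s => (s.take j, s.drop (j+1)))
      (fun p => p.1 ++ 0 :: p.2) ?_ ?_ ?_ ?_ ?_
    · intro s hs
      obtain ⟨hs, hc⟩ := Finset.mem_filter.mp hs
      obtain ⟨hlen, hluk⟩ := (hmem n s).mp hs
      have hjlen : j < s.length := by omega
      have h1 : ht s (j+1) = 0 := by rw [ht_succ s j hjlen, hc.1, hc.2, add_zero]
      have htake := take_mem_luk s hluk j (le_of_lt hjlen) hc.2
      have hdrop := drop_mem_luk s hluk (j+1) h1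
      rw [Finset.mem_product]
      constructor
      · exact (hmem j _).mpr ⟨htake.1, htake.2⟩
      · exact (hmem (n-1-j) _).mpr ⟨by rw [hdrop.1]; omega, hdrop.2⟩
    · rintro ⟨a, b⟩ hp
      rw [Finset.mem_product] at hp
      obtain ⟨ha, hb⟩ := hp
      obtain ⟨hl1, hk1⟩ := (hmem j a).mp ha
      obtain ⟨hl2, hk2⟩ := (hmem (n-1-j) b).mp hb
      rw [Finset.mem_filter]
      refine ⟨(hmem n _).mpr ⟨by simp [hl1, hl2]; omega, append_mem_luk a b hk1 hk2⟩, ?_, ?_⟩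
      · show (a ++ 0 :: b).getD j 0 = 0
        rw [← hl1]
        rw [List.getD_eq_getElem?_getD, List.getElem?_append_right (le_refl a.length)]
        simp
      · show ((a ++ 0 :: b).take j).sum = 0
        rw [← hl1, List.take_left]
        exact hk1.2.2
    · intro s hs
      obtain ⟨hs, hc⟩ := Finset.mem_filter.mp hs
      obtain ⟨hlen, hluk⟩ := (hmem n s).mp hs
      have hjlen : j < s.length := by omega
      have hget : s[j] = 0 := by
        have := hc.1
        rw [List.getD_eq_getElem?_getD, List.getElem?_eq_getElem hjlen] at this
        simpa using this
      simp only []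
      conv_rhs => rw [← List.take_append_drop j s, List.drop_eq_getElem_cons hjlen]
      rw [hget]
    · rintro ⟨a, b⟩ hp
      rw [Finset.mem_product] at hp
      obtain ⟨hl1, -⟩ := (hmem j a).mp hp.1
      have h1 : (a ++ 0 :: b).take j = a := by rw [← hl1, List.take_left]
      have h2 : (a ++ 0 :: b).drop (j+1) = b := by
        rw [← hl1, show a.length + 1 = a.length + 1 from rfl, List.drop_append]
        simp
      simp [h1, h2]
    · intro s hs
      rfl
  rw [key, Finset.sum_product]
  have hms : ∀ a : List ℤ, ∑ b ∈ (luk_finite (n-1-j)).toFinset,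
      wtStepX x c₁ w a * (-x) * wtStep w b
      = wtStepX x c₁ w a * (-x) * ∑ b ∈ (luk_finite (n-1-j)).toFinset, wtStep w b :=
    fun a => by rw [Finset.mul_sum]
  rw [Finset.sum_congr rfl fun a _ => hms a, ← Finset.sum_mul, ← Finset.sum_mul]

lemma coeff_vanish (x : ℝ) (X : PowerSeries ℝ) (n m : ℕ) (h : n < m) :
    PowerSeries.coeff n (X * ((-x) • (PowerSeries.X * X)) ^ m) = 0 := by
  have e : X * ((-x) • (PowerSeries.X * X)) ^ m
      = ((-x) ^ m) • ((X * X ^ m) * PowerSeries.X ^ m) := by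
    rw [smul_pow, mul_pow, mul_smul_comm]
    congr 1
    ring
  rw [e, map_smul, smul_eq_mul, PowerSeries.coeff_mul_X_pow', if_neg (by omega)]
  ring

lemma R_rec (x : ℝ) (X : PowerSeries ℝ) (n : ℕ) :
    ∑ m ∈ range (n + 1), PowerSeries.coeff n (X * ((-x) • (PowerSeries.X * X)) ^ m)
      = PowerSeries.coeff n X + ∑ j ∈ range n,
          (∑ m ∈ range (j + 1), PowerSeries.coeff j (X * ((-x) • (PowerSeries.X * X)) ^ m))
            * (-x) * PowerSeries.coeff (n - 1 - j) X := by
  set T := (-x) • (PowerSeries.X * X) with hT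
  match n with
  | 0 => simp
  | (n+1) =>
    rw [Finset.sum_range_succ']
    have e0 : PowerSeries.coeff (n+1) (X * T ^ 0) = PowerSeries.coeff (n+1) X := by
      simp
    have e1 : ∀ m, PowerSeries.coeff (n+1) (X * T ^ (m+1))
        = (-x) * ∑ j ∈ range (n+1),
            PowerSeries.coeff j (X * T ^ m) * PowerSeries.coeff (n - j) X := by
      intro m
      have e : X * T ^ (m+1) = (-x) • (PowerSeries.X * ((X * T ^ m) * X)) := by
        rw [pow_succ]
        rw [show T ^ m * T = T ^ m * ((-x) • (PowerSeries.X * X)) from rfl]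
        rw [mul_smul_comm, mul_smul_comm]
        congr 1
        ring
      rw [e, map_smul, smul_eq_mul, PowerSeries.coeff_succ_X_mul, PowerSeries.coeff_mul,
        Finset.Nat.sum_antidiagonal_eq_sum_range_succ_mk]
    rw [e0, Finset.sum_congr rfl fun m _ => e1 m, ← Finset.mul_sum, Finset.sum_comm, add_comm]
    congr 1
    rw [Finset.mul_sum]
    refine Finset.sum_congr rfl fun j hj => ?_
    simp only [mem_range] at hj
    have etrunc : ∑ m ∈ range (n + 1), PowerSeries.coeff j (X * T ^ m)
        = ∑ m ∈ range (j + 1), PowerSeries.coeff j (X * T ^ m) := by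
      refine (Finset.sum_subset (by intro m hm; simp only [mem_range] at *; omega) ?_).symm
      intro m _ hm
      simp only [mem_range] at hm
      exact coeff_vanish x X j m (by omega)
    have h2 : ∑ m ∈ range (n+1),
        PowerSeries.coeff j (X * T ^ m) * PowerSeries.coeff (n - j) X
        = (∑ m ∈ range (j+1), PowerSeries.coeff j (X * T ^ m))
            * PowerSeries.coeff (n - j) X := by
      rw [← Finset.sum_mul, etrunc]
    have h3 : n + 1 - 1 - j = n - j := by omega
    rw [h2, h3]
    ring

/-- If `X(z) = Σ_ℓ Σ_{Γ∈L(ℓ)} wt₀(Γ) z^ℓ` is the generating series of the weights at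
`x = 0` (where the weight of a horizontal step at height `0` is `c₁`), then
`Σ_ℓ Σ_{Γ∈L(ℓ)} wt_x(Γ) z^ℓ = X(z)·Σ_{m≥0}(−x·z·X(z))^m`, stated coefficientwise
(only `m ≤ n` contributes to the coefficient of `z^n`). -/
theorem weight_deformation_series (x c₁ : ℝ) (w : ℤ → ℕ → ℝ) (hw : w 0 0 = c₁)
    (X : PowerSeries ℝ)
    (hX : X = PowerSeries.mk fun ℓ =>
      ∑ᶠ s ∈ {s : List ℤ | s.length = ℓ ∧ IsLuk s}, wtStep w s) :
    ∀ n : ℕ,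
      (∑ᶠ s ∈ {s : List ℤ | s.length = n ∧ IsLuk s}, wtStepX x c₁ w s) =
        ∑ m ∈ Finset.range (n + 1),
          PowerSeries.coeff n (X * ((-x) • (PowerSeries.X * X)) ^ m) := by
  have hfins : ∀ (m : ℕ) (f : List ℤ → ℝ),
      (∑ᶠ s ∈ {s : List ℤ | s.length = m ∧ IsLuk s}, f s)
        = ∑ s ∈ (luk_finite m).toFinset, f s := by
    intro m f
    have h := finsum_mem_coe_finset (s := (luk_finite m).toFinset) (f := f)
    rw [Set.Finite.coe_toFinset] at h
    exact h
  have hXC : ∀ ℓ : ℕ, PowerSeries.coeff ℓ X = ∑ s ∈ (luk_finite ℓ).toFinset, wtStep w s := by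
    intro ℓ
    rw [hX, PowerSeries.coeff_mk, hfins]
  intro n
  induction n using Nat.strong_induction_on with
  | _ n ih =>
    rw [hfins, Y_rec x c₁ w hw n, R_rec x X n, ← hXC]
    congr 1
    refine Finset.sum_congr rfl fun j hj => ?_
    simp only [Finset.mem_range] at hj
    rw [← hXC, ← hfins, ih j hj]
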